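/- arXiv:2604.25344 — 2 statements merged into one kernel-verified Lean document; each statement's English description precedes it below -/
import Mathlib

section
/- Let K be a simplicial complex. The following are equivalent: (1) K is HMF over Z/p for every prime p (i.e. for every nonempty J ⊆ [m], H̃_*(K_J; Z/p) is generated by missing-face classes); (2) K is HMF over Z and H̃_*(K_J; Z) is torsion-free for every nonempty J ⊆ [m]. -/
/-!
STATEMENT 8: for a finite simplicial complex `K` on `[m]`, the following are equivalent:
(1) `K` is HMF over `ℤ/p` for every prime `p`: for every nonempty `J ⊆ [m]`,
    `H̃_*(K_J; ℤ/p)` is generated by the missing-face classes of `K_J`;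
(2) `K` is HMF over `ℤ`, and `H̃_*(K_J; ℤ)` is torsion-free for every nonempty `J ⊆ [m]`.
Reduced homology is realised concretely as cycles modulo boundaries of the augmented
simplicial chain complex.
-/


/-- The boundary operator of the augmented simplicial chain complex on `Fin m`:
`d(e_J) = Σ_{j∈J} (−1)^{|J_{<j}|} e_{J∖{j}}`, extended linearly. -/
noncomputable def simplicialBoundary (R : Type*) [CommRing R] (m : ℕ) :
    (Finset (Fin m) → R) →ₗ[R] (Finset (Fin m) → R) :=
  Matrix.mulVecLin (Matrix.of fun τ J : Finset (Fin m) =>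
    ∑ j ∈ J, if J.erase j = τ then (-1 : R) ^ ((J.filter (· < j)).card) else 0)

/-- The submodule of chains supported on the faces of `K`. -/
noncomputable def chainsOn (R : Type*) [CommRing R] {m : ℕ} (K : Finset (Finset (Fin m))) :
    Submodule R (Finset (Fin m) → R) :=
  Submodule.pi Set.univ (fun σ => if σ ∈ K then (⊤ : Submodule R R) else ⊥)

/-- Cycles of the augmented simplicial chain complex of `K`. -/
noncomputable def cyclesOn (R : Type*) [CommRing R] {m : ℕ} (K : Finset (Finset (Fin m))) :
    Submodule R (Finset (Fin m) → R) :=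
  chainsOn R K ⊓ LinearMap.ker (simplicialBoundary R m)

/-- Boundaries of the augmented simplicial chain complex of `K`. -/
noncomputable def boundariesOn (R : Type*) [CommRing R] {m : ℕ} (K : Finset (Finset (Fin m))) :
    Submodule R (Finset (Fin m) → R) :=
  Submodule.map (simplicialBoundary R m) (chainsOn R K)

/-- The (total) reduced simplicial homology `H̃_*(K; R)`: cycles modulo boundaries. -/
noncomputable def redHomology (R : Type*) [CommRing R] {m : ℕ}
    (K : Finset (Finset (Fin m))) : Type _ :=
  ↥(cyclesOn R K) ⧸ ((boundariesOn R K).comap (cyclesOn R K).subtype)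

noncomputable instance (R : Type*) [CommRing R] {m : ℕ} (K : Finset (Finset (Fin m))) :
    AddCommGroup (redHomology R K) :=
  inferInstanceAs (AddCommGroup
    (↥(cyclesOn R K) ⧸ ((boundariesOn R K).comap (cyclesOn R K).subtype)))

noncomputable instance (R : Type*) [CommRing R] {m : ℕ} (K : Finset (Finset (Fin m))) :
    Module R (redHomology R K) :=
  inferInstanceAs (Module R
    (↥(cyclesOn R K) ⧸ ((boundariesOn R K).comap (cyclesOn R K).subtype)))

/-- The chain `c_I = Σ_{i∈I} (−1)^{|I_{<i}|} e_{I∖{i}}` associated to `I ⊆ [m]`. -/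
noncomputable def missingFaceChain (R : Type*) [CommRing R] {m : ℕ} (I : Finset (Fin m)) :
    Finset (Fin m) → R :=
  fun τ => ∑ i ∈ I, if I.erase i = τ then (-1 : R) ^ ((I.filter (· < i)).card) else 0

/-- The homology class `[∂Δ_I] ∈ H̃_{|I|−2}(K; R)` of a missing face `I`. -/
noncomputable def mfClass (R : Type*) [CommRing R] {m : ℕ} (K : Finset (Finset (Fin m)))
    (I : Finset (Fin m)) : redHomology R K :=
  letI := Classical.dec (missingFaceChain R I ∈ cyclesOn R K)
  if h : missingFaceChain R I ∈ cyclesOn R K then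
    (Submodule.Quotient.mk (⟨missingFaceChain R I, h⟩ : ↥(cyclesOn R K)) :
      ↥(cyclesOn R K) ⧸ ((boundariesOn R K).comap (cyclesOn R K).subtype))
  else 0

/-- `I` is a missing face of `K`: `I` is not a face but all its proper subsets are. -/
def IsMissingFace {m : ℕ} (K : Finset (Finset (Fin m))) (I : Finset (Fin m)) : Prop :=
  I ∉ K ∧ ∀ J ⊂ I, J ∈ K

/-- `K` is HMF over `R`: for each nonempty `J ⊆ [m]`, the reduced homology of the full
subcomplex `K_J` is generated by its missing-face classes. -/
def IsHMF (R : Type*) [CommRing R] {m : ℕ} (K : Finset (Finset (Fin m))) : Prop :=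
  ∀ J : Finset (Fin m), J.Nonempty →
    Submodule.span R
      ((fun I => mfClass R (K.filter (· ⊆ J)) I) ''
        {I | IsMissingFace (K.filter (· ⊆ J)) I}) = ⊤


namespace Stmt8Aux

variable {R : Type*} [CommRing R] {m : ℕ}

/-- entries of the boundary matrix -/
noncomputable def D (R : Type*) [CommRing R] {m : ℕ} (τ J : Finset (Fin m)) : R :=
  ∑ j ∈ J, if J.erase j = τ then (-1 : R) ^ ((J.filter (· < j)).card) else 0

lemma sb_apply (x : Finset (Fin m) → R) (τ : Finset (Fin m)) :
    simplicialBoundary R m x τ = ∑ J : Finset (Fin m), D R τ J * x J := by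
  simp [simplicialBoundary, Matrix.mulVecLin_apply, Matrix.mulVec, dotProduct, D]

lemma D_eq_zero_of_not_subset {τ J : Finset (Fin m)} (h : ¬ τ ⊆ J) : D R τ J = 0 := by
  refine Finset.sum_eq_zero fun j hj => ?_
  rw [if_neg]
  intro he
  exact h (he ▸ Finset.erase_subset j J)


lemma pow_filter_erase_high {J : Finset (Fin m)} {i j : Fin m} (hij : i < j) :
    (-1:R) ^ (Finset.filter (· < i) (J.erase j)).card
      = (-1:R) ^ (Finset.filter (· < i) J).card := by
  rw [Finset.filter_erase, Finset.erase_eq_of_notMem]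
  simp only [Finset.mem_filter]
  rintro ⟨-, hji⟩
  exact absurd (hij.trans hji) (lt_irrefl i)

lemma pow_filter_erase_low {J : Finset (Fin m)} {i j : Fin m} (hi : i ∈ J) (hij : i < j) :
    (-1:R) ^ (Finset.filter (· < j) (J.erase i)).card
      = - (-1:R) ^ (Finset.filter (· < j) J).card := by
  rw [Finset.filter_erase]
  have hmem : i ∈ J.filter (· < j) := Finset.mem_filter.2 ⟨hi, hij⟩
  have hpos : 0 < (J.filter (· < j)).card := Finset.card_pos.2 ⟨i, hmem⟩
  obtain ⟨c, hc⟩ : ∃ c, (J.filter (· < j)).card = c + 1 :=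
    ⟨_, (Nat.succ_pred_eq_of_pos hpos).symm⟩
  rw [Finset.card_erase_of_mem hmem, hc]
  simp [pow_succ]

lemma D_mul_D (σ J : Finset (Fin m)) :
    ∑ τ : Finset (Fin m), D R σ τ * D R τ J = 0 := by
  have step1 : ∑ τ : Finset (Fin m), D R σ τ * D R τ J
      = ∑ j ∈ J, D R σ (J.erase j) * (-1:R) ^ (Finset.filter (· < j) J).card := by
    simp only [D, Finset.mul_sum, Finset.sum_comm (s := Finset.univ)]
    refine Finset.sum_congr rfl fun j _ => ?_
    rw [Finset.sum_eq_single (J.erase j)]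
    · rw [if_pos rfl]
    · intro b _ hb
      rw [if_neg (fun h => hb h.symm), mul_zero]
    · intro h
      exact absurd (Finset.mem_univ _) h
  rw [step1]
  simp only [D, Finset.sum_mul]
  have h2 : ∑ p ∈ J.sigma (fun j => J.erase j),
      ((if (J.erase p.1).erase p.2 = σ
        then (-1:R) ^ (Finset.filter (· < p.2) (J.erase p.1)).card else 0)
      * (-1:R) ^ (Finset.filter (· < p.1) J).card) = 0 := by
    refine Finset.sum_involution (fun p _ => ⟨p.2, p.1⟩) ?_ ?_ ?_ ?_
    · rintro ⟨j, i⟩ hp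
      rw [Finset.mem_sigma] at hp
      obtain ⟨hj, hi'⟩ := hp
      rw [Finset.mem_erase] at hi'
      obtain ⟨hij, hi⟩ := hi'
      have hcomm : (J.erase j).erase i = (J.erase i).erase j := Finset.erase_right_comm
      simp only [hcomm]
      rcases lt_or_gt_of_ne hij with h | h
      · rw [pow_filter_erase_high h, pow_filter_erase_low hi h]
        split <;> ring
      · rw [pow_filter_erase_low hj h, pow_filter_erase_high h]
        split <;> ring
    · rintro ⟨j, i⟩ hp hf h
      rw [Finset.mem_sigma, Finset.mem_erase] at hp
      exact hp.2.1 (congrArg Sigma.fst h)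
    · rintro ⟨j, i⟩ hp
      rw [Finset.mem_sigma, Finset.mem_erase] at hp ⊢
      exact ⟨hp.2.2, hp.2.1.symm, hp.1⟩
    · rintro ⟨j, i⟩ hp
      rfl
  exact (Finset.sum_sigma J (fun j => J.erase j) _).symm.trans h2

lemma sb_sb (x : Finset (Fin m) → R) :
    simplicialBoundary R m (simplicialBoundary R m x) = 0 := by
  funext τ
  rw [sb_apply]
  have key : ∀ τ' : Finset (Fin m), D R τ τ' * simplicialBoundary R m x τ'
      = ∑ J : Finset (Fin m), (D R τ τ' * D R τ' J) * x J := by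
    intro τ'
    rw [sb_apply, Finset.mul_sum]
    simp [mul_assoc]
  simp only [key]
  rw [Finset.sum_comm]
  simp only [← Finset.sum_mul]
  simp [D_mul_D]

lemma mem_chainsOn {K : Finset (Finset (Fin m))} {x : Finset (Fin m) → R} :
    x ∈ chainsOn R K ↔ ∀ τ, τ ∉ K → x τ = 0 := by
  rw [chainsOn, Submodule.mem_pi]
  constructor
  · intro h τ hτ
    have := h τ (Set.mem_univ τ)
    simp only [if_neg hτ] at this
    simpa using this
  · intro h τ _
    by_cases hτ : τ ∈ K
    · simp [hτ]
    · simp [hτ, h τ hτ]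

lemma sb_mem_chainsOn {K : Finset (Finset (Fin m))}
    (hdown : ∀ σ ∈ K, ∀ τ ⊆ σ, τ ∈ K) {x : Finset (Fin m) → R} (hx : x ∈ chainsOn R K) :
    simplicialBoundary R m x ∈ chainsOn R K := by
  rw [mem_chainsOn] at hx ⊢
  intro τ hτ
  rw [sb_apply]
  refine Finset.sum_eq_zero fun J _ => ?_
  by_cases hJ : J ∈ K
  · have hD : D R τ J = 0 := by
      refine Finset.sum_eq_zero fun j hj => ?_
      rw [if_neg]
      intro he
      exact hτ (he ▸ hdown J hJ _ (Finset.erase_subset j J))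
    rw [hD, zero_mul]
  · rw [hx J hJ, mul_zero]

lemma mfChain_eq (I : Finset (Fin m)) :
    missingFaceChain R I
      = simplicialBoundary R m (fun τ => if τ = I then 1 else 0) := by
  funext τ
  rw [sb_apply, Finset.sum_eq_single I]
  · simp [missingFaceChain, D]
  · intro b _ hb
    simp [hb]
  · intro h
    exact absurd (Finset.mem_univ _) h

lemma sb_mfChain (I : Finset (Fin m)) :
    simplicialBoundary R m (missingFaceChain R I) = 0 := by
  rw [mfChain_eq]
  exact sb_sb _

lemma mfChain_mem_chainsOn {L : Finset (Finset (Fin m))} {I : Finset (Fin m)}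
    (hI : IsMissingFace L I) : missingFaceChain R I ∈ chainsOn R L := by
  rw [mem_chainsOn]
  intro τ hτ
  refine Finset.sum_eq_zero fun i hi => ?_
  rw [if_neg]
  intro he
  exact hτ (he ▸ hI.2 _ (Finset.erase_ssubset hi))

lemma mfChain_mem_cyclesOn {L : Finset (Finset (Fin m))} {I : Finset (Fin m)}
    (hI : IsMissingFace L I) : missingFaceChain R I ∈ cyclesOn R L :=
  Submodule.mem_inf.2 ⟨mfChain_mem_chainsOn hI, LinearMap.mem_ker.2 (sb_mfChain I)⟩

lemma boundariesOn_le_cyclesOn {L : Finset (Finset (Fin m))}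
    (hdown : ∀ σ ∈ L, ∀ τ ⊆ σ, τ ∈ L) : boundariesOn R L ≤ cyclesOn R L := by
  rintro x ⟨w, hw, rfl⟩
  exact Submodule.mem_inf.2 ⟨sb_mem_chainsOn hdown hw, LinearMap.mem_ker.2 (sb_sb w)⟩

/-- set of missing face chains -/
def mfSet (R : Type*) [CommRing R] {m : ℕ} (L : Finset (Finset (Fin m))) :
    Set (Finset (Fin m) → R) :=
  missingFaceChain R '' {I | IsMissingFace L I}

/-- span of missing face chains together with boundaries -/
noncomputable def bigM (R : Type*) [CommRing R] {m : ℕ} (L : Finset (Finset (Fin m))) :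
    Submodule R (Finset (Fin m) → R) :=
  Submodule.span R (mfSet R L) ⊔ boundariesOn R L

lemma span_mfSet_le_cyclesOn (L : Finset (Finset (Fin m))) :
    Submodule.span R (mfSet R L) ≤ cyclesOn R L := by
  rw [Submodule.span_le]
  rintro x ⟨I, hI, rfl⟩
  exact mfChain_mem_cyclesOn hI

lemma bigM_le_cyclesOn {L : Finset (Finset (Fin m))}
    (hdown : ∀ σ ∈ L, ∀ τ ⊆ σ, τ ∈ L) : bigM R L ≤ cyclesOn R L :=
  sup_le (span_mfSet_le_cyclesOn L) (boundariesOn_le_cyclesOn hdown)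

/-- the missing face chain as an element of the cycles, or `0` -/
noncomputable def cycChain (R : Type*) [CommRing R] {m : ℕ} (L : Finset (Finset (Fin m)))
    (I : Finset (Fin m)) : ↥(cyclesOn R L) :=
  letI := Classical.dec (missingFaceChain R I ∈ cyclesOn R L)
  if h : missingFaceChain R I ∈ cyclesOn R L then ⟨missingFaceChain R I, h⟩ else 0

lemma mfClass_eq (L : Finset (Finset (Fin m))) (I : Finset (Fin m)) :
    mfClass R L I
      = ((boundariesOn R L).comap (cyclesOn R L).subtype).mkQ (cycChain R L I) := by
  unfold mfClass cycChain
  rcases em (missingFaceChain R I ∈ cyclesOn R L) with h | h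
  · rw [dif_pos h]
    exact dif_pos h
  · rw [dif_neg h, map_zero]
    exact dif_neg h

lemma map_mkQ_eq_top_iff {Mo : Type*} [AddCommGroup Mo] [Module R Mo]
    (W U : Submodule R Mo) : Submodule.map W.mkQ U = ⊤ ↔ U ⊔ W = ⊤ := by
  constructor
  · intro h
    have h2 := congrArg (Submodule.comap W.mkQ) h
    rw [Submodule.comap_map_mkQ, Submodule.comap_top] at h2
    rw [sup_comm]
    exact h2
  · intro h
    have h2 : Submodule.map W.mkQ (U ⊔ W) = ⊤ := by
      rw [h, Submodule.map_top, Submodule.range_mkQ]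
    have hW : Submodule.map W.mkQ W = ⊥ := by
      rw [eq_bot_iff]
      rintro x ⟨y, hy, rfl⟩
      simpa [Submodule.mkQ_apply, Submodule.Quotient.mk_eq_zero] using hy
    rw [Submodule.map_sup, hW, sup_bot_eq] at h2
    exact h2

lemma spanTop_iff {L : Finset (Finset (Fin m))}
    (hdown : ∀ σ ∈ L, ∀ τ ⊆ σ, τ ∈ L) :
    Submodule.span R ((fun I => mfClass R L I) '' {I | IsMissingFace L I}) = ⊤
      ↔ cyclesOn R L ≤ bigM R L := by
  set Cy := cyclesOn R L
  set Bd := boundariesOn R L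
  set W : Submodule R ↥Cy := Bd.comap Cy.subtype
  have him : (fun I => mfClass R L I) '' {I | IsMissingFace L I}
      = W.mkQ '' ((fun I => cycChain R L I) '' {I | IsMissingFace L I}) := by
    rw [Set.image_image]
    exact Set.image_congr fun I _ => mfClass_eq L I
  rw [him]
  change Submodule.span R (W.mkQ '' ((fun I => cycChain R L I) '' {I | IsMissingFace L I}))
    = (⊤ : Submodule R (↥Cy ⧸ W)) ↔ _
  rw [Submodule.span_image W.mkQ, map_mkQ_eq_top_iff]
  have hsub : Function.Injective Cy.subtype := Subtype.val_injective
  rw [← (Submodule.map_injective_of_injective hsub).eq_iff]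
  rw [Submodule.map_sup, Submodule.map_subtype_top, Submodule.map_comap_subtype]
  have h1 : Submodule.map Cy.subtype
      (Submodule.span R ((fun I => cycChain R L I) '' {I | IsMissingFace L I}))
      = Submodule.span R (mfSet R L) := by
    rw [Submodule.map_span, Set.image_image]
    congr 1
    refine Set.image_congr fun I hI => ?_
    show (cycChain R L I : Finset (Fin m) → R) = missingFaceChain R I
    unfold cycChain
    rw [dif_pos (mfChain_mem_cyclesOn hI)]
  rw [h1, inf_eq_right.2 (boundariesOn_le_cyclesOn hdown)]
  constructor
  · intro h
    exact h.ge
  · intro h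
    exact le_antisymm (bigM_le_cyclesOn hdown) h

lemma torsion_iff (L : Finset (Finset (Fin m))) :
    (∀ (x : redHomology ℤ L) (n : ℤ), n ≠ 0 → n • x = 0 → x = 0)
      ↔ ∀ z ∈ cyclesOn ℤ L, ∀ n : ℤ, n ≠ 0 →
          n • z ∈ boundariesOn ℤ L → z ∈ boundariesOn ℤ L := by
  constructor
  · intro h z hz n hn hnz
    have hx : (Submodule.Quotient.mk (⟨z, hz⟩ : ↥(cyclesOn ℤ L)) :
        ↥(cyclesOn ℤ L) ⧸ ((boundariesOn ℤ L).comap (cyclesOn ℤ L).subtype)) = 0 := by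
      refine h _ n hn ?_
      show (Submodule.Quotient.mk (n • (⟨z, hz⟩ : ↥(cyclesOn ℤ L))) :
        ↥(cyclesOn ℤ L) ⧸ ((boundariesOn ℤ L).comap (cyclesOn ℤ L).subtype)) = 0
      rw [Submodule.Quotient.mk_eq_zero]
      exact hnz
    rw [Submodule.Quotient.mk_eq_zero] at hx
    exact hx
  · intro h x n hn hnx
    obtain ⟨⟨z, hz⟩, rfl⟩ := Submodule.Quotient.mk_surjective _
      (x : ↥(cyclesOn ℤ L) ⧸ ((boundariesOn ℤ L).comap (cyclesOn ℤ L).subtype))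
    have hnz : n • z ∈ boundariesOn ℤ L := by
      have : (Submodule.Quotient.mk (n • (⟨z, hz⟩ : ↥(cyclesOn ℤ L))) :
          ↥(cyclesOn ℤ L) ⧸ ((boundariesOn ℤ L).comap (cyclesOn ℤ L).subtype)) = 0 := hnx
      rwa [Submodule.Quotient.mk_eq_zero] at this
    show (Submodule.Quotient.mk (⟨z, hz⟩ : ↥(cyclesOn ℤ L)) :
        ↥(cyclesOn ℤ L) ⧸ ((boundariesOn ℤ L).comap (cyclesOn ℤ L).subtype)) = 0
    rw [Submodule.Quotient.mk_eq_zero]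
    exact h z hz n hn hnz

/-- the mod-`p` reduction of chains, as a `ℤ`-linear map -/
noncomputable def redMap (p : ℕ) {m : ℕ} :
    (Finset (Fin m) → ℤ) →ₗ[ℤ] (Finset (Fin m) → ZMod p) where
  toFun x := fun τ => ((x τ : ℤ) : ZMod p)
  map_add' x y := by
    funext τ
    simp [Int.cast_add]
  map_smul' n x := by
    funext τ
    simp [smul_eq_mul, zsmul_eq_mul, Int.cast_mul]

lemma redMap_apply (p : ℕ) (x : Finset (Fin m) → ℤ) (τ : Finset (Fin m)) :
    redMap p x τ = ((x τ : ℤ) : ZMod p) := rfl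

lemma D_cast (p : ℕ) (τ J : Finset (Fin m)) :
    ((D ℤ τ J : ℤ) : ZMod p) = D (ZMod p) τ J := by
  simp [D, Int.cast_sum, apply_ite (fun n : ℤ => (n : ZMod p))]

lemma redMap_sb (p : ℕ) (x : Finset (Fin m) → ℤ) :
    redMap p (simplicialBoundary ℤ m x) = simplicialBoundary (ZMod p) m (redMap p x) := by
  funext τ
  rw [redMap_apply, sb_apply, sb_apply]
  rw [Int.cast_sum]
  refine Finset.sum_congr rfl fun J _ => ?_
  rw [Int.cast_mul, D_cast]
  rfl

lemma redMap_mem_chainsOn {p : ℕ} {L : Finset (Finset (Fin m))}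
    {x : Finset (Fin m) → ℤ} (hx : x ∈ chainsOn ℤ L) :
    redMap p x ∈ chainsOn (ZMod p) L := by
  rw [mem_chainsOn] at hx ⊢
  intro τ hτ
  rw [redMap_apply, hx τ hτ]
  simp

lemma redMap_mfChain (p : ℕ) (I : Finset (Fin m)) :
    redMap p (missingFaceChain ℤ I) = missingFaceChain (ZMod p) I := by
  funext τ
  rw [redMap_apply]
  simp [missingFaceChain, Int.cast_sum, apply_ite (fun n : ℤ => (n : ZMod p))]

lemma redMap_chains_surj {p : ℕ} [NeZero p] {L : Finset (Finset (Fin m))}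
    {y : Finset (Fin m) → ZMod p} (hy : y ∈ chainsOn (ZMod p) L) :
    ∃ x ∈ chainsOn ℤ L, redMap p x = y := by
  rw [mem_chainsOn] at hy
  refine ⟨fun τ => if τ ∈ L then ((y τ).val : ℤ) else 0, ?_, ?_⟩
  · rw [mem_chainsOn]
    intro τ hτ
    rw [if_neg hτ]
  · funext τ
    rw [redMap_apply]
    by_cases hτ : τ ∈ L
    · simp [hτ, ZMod.natCast_val, ZMod.cast_id]
    · simp [hτ, (hy τ hτ).symm]

lemma redMap_eq_zero_div {p : ℕ} {L : Finset (Finset (Fin m))}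
    {x : Finset (Fin m) → ℤ} (hx : x ∈ chainsOn ℤ L) (h0 : redMap p x = 0) :
    ∃ z ∈ chainsOn ℤ L, x = (p : ℤ) • z := by
  have hdvd : ∀ τ, (p : ℤ) ∣ x τ := by
    intro τ
    have := congrFun h0 τ
    rw [redMap_apply] at this
    exact (ZMod.intCast_zmod_eq_zero_iff_dvd _ _).1 this
  refine ⟨fun τ => x τ / p, ?_, ?_⟩
  · rw [mem_chainsOn] at hx ⊢
    intro τ hτ
    rw [hx τ hτ]
    simp
  · funext τ
    have := (hdvd τ)
    simp only [Pi.smul_apply, smul_eq_mul]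
    exact (Int.mul_ediv_cancel' this).symm

lemma redMap_bigM_mem {p : ℕ} {L : Finset (Finset (Fin m))}
    {x : Finset (Fin m) → ℤ} (hx : x ∈ bigM ℤ L) :
    redMap p x ∈ bigM (ZMod p) L := by
  obtain ⟨s, hs, b, hb, rfl⟩ := Submodule.mem_sup.1 hx
  clear hx
  rw [map_add]
  refine Submodule.add_mem _ ?_ ?_
  · refine Submodule.mem_sup_left ?_
    induction hs using Submodule.span_induction with
    | mem v hv =>
      obtain ⟨I, hI, rfl⟩ := hv
      exact Submodule.subset_span ⟨I, hI, (redMap_mfChain p I).symm ▸ rfl⟩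
    | zero => simp
    | add v w _ _ hv hw => rw [map_add]; exact Submodule.add_mem _ hv hw
    | smul n v _ hv =>
      rw [map_smul, ← Int.cast_smul_eq_zsmul (ZMod p)]
      exact Submodule.smul_mem _ _ hv
  · refine Submodule.mem_sup_right ?_
    obtain ⟨w, hw, rfl⟩ := hb
    rw [redMap_sb]
    exact ⟨redMap p w, redMap_mem_chainsOn hw, rfl⟩

lemma redMap_bigM_surj {p : ℕ} [NeZero p] {L : Finset (Finset (Fin m))}
    {y : Finset (Fin m) → ZMod p} (hy : y ∈ bigM (ZMod p) L) :
    ∃ x ∈ bigM ℤ L, redMap p x = y := by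
  obtain ⟨s, hs, b, hb, rfl⟩ := Submodule.mem_sup.1 hy
  clear hy
  have h1 : ∃ x ∈ bigM ℤ L, redMap p x = s := by
    induction hs using Submodule.span_induction with
    | mem v hv =>
      obtain ⟨I, hI, rfl⟩ := hv
      exact ⟨missingFaceChain ℤ I,
        Submodule.mem_sup_left (Submodule.subset_span ⟨I, hI, rfl⟩), redMap_mfChain p I⟩
    | zero => exact ⟨0, Submodule.zero_mem _, map_zero _⟩
    | add v w _ _ hv hw =>
      obtain ⟨xv, hxv, rfl⟩ := hv
      obtain ⟨xw, hxw, rfl⟩ := hw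
      exact ⟨xv + xw, Submodule.add_mem _ hxv hxw, map_add _ _ _⟩
    | smul c v _ hv =>
      obtain ⟨xv, hxv, rfl⟩ := hv
      obtain ⟨n, rfl⟩ := ZMod.intCast_surjective c
      refine ⟨n • xv, Submodule.smul_mem _ _ hxv, ?_⟩
      rw [map_smul, Int.cast_smul_eq_zsmul (ZMod p)]
  obtain ⟨x1, hx1, rfl⟩ := h1
  obtain ⟨w, hw, rfl⟩ := hb
  obtain ⟨w1, hw1, rfl⟩ := redMap_chains_surj hw
  refine ⟨x1 + simplicialBoundary ℤ m w1,
    Submodule.add_mem _ hx1 (Submodule.mem_sup_right ⟨w1, hw1, rfl⟩), ?_⟩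
  rw [map_add, redMap_sb]

/-- a finitely generated `ℤ`-module divisible by every prime is trivial -/
theorem lemA {Q : Type*} [AddCommGroup Q] [inst : Module ℤ Q] [Module.Finite ℤ Q]
    (h : ∀ p : ℕ, p.Prime → ∀ x : Q, ∃ y : Q, x = (p : ℤ) • y) (x : Q) : x = 0 := by
  have huniq := (AddCommGroup.uniqueIntModule (M := Q)).uniq inst
  subst huniq
  haveI : IsCoatomic (Submodule ℤ Q) :=
    CompleteLattice.coatomic_of_top_compact
      ((Submodule.fg_iff_compact ⊤).1 (Module.finite_def.1 ‹_›))
  rcases eq_top_or_exists_le_coatom (⊥ : Submodule ℤ Q) with hbot | ⟨W, hW, -⟩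
  · have : x ∈ (⊥ : Submodule ℤ Q) := hbot ▸ Submodule.mem_top
    simpa using this
  exfalso
  obtain ⟨x0, -, hx0⟩ := SetLike.exists_of_lt (hW.1.lt_top)
  have hsup : W ⊔ Submodule.span ℤ {x0} = ⊤ := by
    refine hW.2 _ (lt_of_le_of_ne le_sup_left fun hEq => hx0 ?_)
    rw [hEq]
    exact Submodule.mem_sup_right (Submodule.mem_span_singleton_self x0)
  set I : Ideal ℤ := Submodule.comap (LinearMap.toSpanSingleton ℤ Q x0) W with hIdef
  have hmemI : ∀ n : ℤ, n ∈ I ↔ n • x0 ∈ W := by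
    intro n
    rw [hIdef, Submodule.mem_comap, LinearMap.toSpanSingleton_apply]
  obtain ⟨g, hg⟩ := (IsPrincipalIdealRing.principal I).principal
  have hg1 : g.natAbs ≠ 1 := by
    intro h1
    have hunit : IsUnit g := by
      rcases Int.natAbs_eq_iff.1 h1 with h' | h' <;> simp [h']
    obtain ⟨u, hu⟩ := hunit.exists_right_inv
    have h1I : (1 : ℤ) ∈ I := by
      rw [hg]
      exact Submodule.mem_span_singleton.2 ⟨u, by rw [smul_eq_mul, mul_comm]; exact hu⟩
    rw [hmemI] at h1I
    rw [one_smul] at h1I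
    exact hx0 h1I
  obtain ⟨q, hq, hqg⟩ := Int.exists_prime_and_dvd hg1
  have hp : q.natAbs.Prime := Int.prime_iff_natAbs_prime.1 hq
  obtain ⟨y, hy⟩ := h q.natAbs hp x0
  obtain ⟨w, hw, z, hz, hwz⟩ := Submodule.mem_sup.1 (hsup ▸ Submodule.mem_top (x := y))
  obtain ⟨k, hk⟩ := Submodule.mem_span_singleton.1 hz
  have hkey : (1 - (q.natAbs : ℤ) * k) • x0 ∈ W := by
    have hc : (1 - (q.natAbs : ℤ) * k) • x0 = (q.natAbs : ℤ) • w := by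
      rw [sub_smul, one_smul, mul_smul, hk]
      rw [hy, ← hwz, smul_add]
      abel
    rw [hc]
    exact Submodule.smul_mem _ _ hw
  rw [← hmemI, hg] at hkey
  obtain ⟨a, ha⟩ := Submodule.mem_span_singleton.1 hkey
  have hgdvd : g ∣ 1 - (q.natAbs : ℤ) * k := ⟨a, by rw [← ha, smul_eq_mul]; ring⟩
  have hq1 : q ∣ 1 := by
    have h2 : q ∣ 1 - (q.natAbs : ℤ) * k := hqg.trans hgdvd
    have h3 : q ∣ (q.natAbs : ℤ) * k := Dvd.dvd.mul_right (Int.dvd_natAbs.2 dvd_rfl) k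
    simpa using dvd_add h2 h3
  exact hq.not_unit (isUnit_of_dvd_one hq1)

lemma mem_cyclesOn {L : Finset (Finset (Fin m))} {x : Finset (Fin m) → R} :
    x ∈ cyclesOn R L ↔ x ∈ chainsOn R L ∧ simplicialBoundary R m x = 0 := by
  rw [cyclesOn, Submodule.mem_inf, LinearMap.mem_ker]

lemma psmul_red (p : ℕ) (v : Finset (Fin m) → ZMod p) : (p : ℤ) • v = 0 := by
  funext τ
  simp [Pi.smul_apply, zsmul_eq_mul, ZMod.natCast_self]

lemma core_back {L : Finset (Finset (Fin m))} (hdown : ∀ σ ∈ L, ∀ τ ⊆ σ, τ ∈ L)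
    (hM : cyclesOn ℤ L ≤ bigM ℤ L)
    (htf : ∀ z ∈ cyclesOn ℤ L, ∀ n : ℤ, n ≠ 0 →
      n • z ∈ boundariesOn ℤ L → z ∈ boundariesOn ℤ L)
    (p : ℕ) (hp : p.Prime) : cyclesOn (ZMod p) L ≤ bigM (ZMod p) L := by
  haveI : NeZero p := ⟨hp.pos.ne'⟩
  have hpZ : (p : ℤ) ≠ 0 := by exact_mod_cast hp.pos.ne'
  intro y hy
  obtain ⟨hyc, hyd⟩ := mem_cyclesOn.1 hy
  obtain ⟨x, hxc, rfl⟩ := redMap_chains_surj hyc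
  have hdx : redMap p (simplicialBoundary ℤ m x) = 0 := by rw [redMap_sb]; exact hyd
  have hdxc : simplicialBoundary ℤ m x ∈ chainsOn ℤ L := sb_mem_chainsOn hdown hxc
  obtain ⟨z, hzc, hz⟩ := redMap_eq_zero_div hdxc hdx
  have hdz : simplicialBoundary ℤ m z = 0 := by
    have h1 : (p : ℤ) • simplicialBoundary ℤ m z = 0 := by
      rw [← map_smul, ← hz]
      exact sb_sb x
    rcases smul_eq_zero.1 h1 with h | h
    · exact absurd h hpZ
    · exact h
  have hzcy : z ∈ cyclesOn ℤ L := mem_cyclesOn.2 ⟨hzc, hdz⟩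
  have hpz : (p : ℤ) • z ∈ boundariesOn ℤ L := ⟨x, hxc, hz⟩
  obtain ⟨w, hwc, hwd⟩ := htf z hzcy p hpZ hpz
  have hxw : x - (p : ℤ) • w ∈ cyclesOn ℤ L := by
    refine mem_cyclesOn.2 ⟨sub_mem hxc (Submodule.smul_mem _ _ hwc), ?_⟩
    rw [map_sub, map_smul, hwd, hz, sub_self]
  have hmem := redMap_bigM_mem (p := p) (hM hxw)
  rwa [map_sub, map_smul, psmul_red, sub_zero] at hmem

lemma core_fwd_tfp {L : Finset (Finset (Fin m))} (hdown : ∀ σ ∈ L, ∀ τ ⊆ σ, τ ∈ L)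
    (hall : ∀ p : ℕ, p.Prime → cyclesOn (ZMod p) L ≤ bigM (ZMod p) L) :
    ∀ z ∈ cyclesOn ℤ L, ∀ p : ℕ, p.Prime →
      (p : ℤ) • z ∈ boundariesOn ℤ L → z ∈ boundariesOn ℤ L := by
  intro z hz p hp hpz
  haveI : NeZero p := ⟨hp.pos.ne'⟩
  have hpZ : (p : ℤ) ≠ 0 := by exact_mod_cast hp.pos.ne'
  obtain ⟨y, hyc, hyd⟩ := hpz
  have h1 : redMap p y ∈ cyclesOn (ZMod p) L := by
    refine mem_cyclesOn.2 ⟨redMap_mem_chainsOn hyc, ?_⟩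
    rw [← redMap_sb, hyd]
    rw [LinearMap.map_smul]
    exact psmul_red p _
  obtain ⟨x, hxM, hxred⟩ := redMap_bigM_surj (hall p hp h1)
  have hxcy := bigM_le_cyclesOn hdown hxM
  have hxc : x ∈ chainsOn ℤ L := (mem_cyclesOn.1 hxcy).1
  have hdx : simplicialBoundary ℤ m x = 0 := (mem_cyclesOn.1 hxcy).2
  obtain ⟨w, hwc, hw⟩ := redMap_eq_zero_div (p := p) (sub_mem hyc hxc)
    (by rw [map_sub, hxred, sub_self])
  have hkey : (p : ℤ) • (z - simplicialBoundary ℤ m w) = 0 := by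
    have h2 : (p : ℤ) • simplicialBoundary ℤ m w = (p : ℤ) • z := by
      rw [← map_smul, ← hw, map_sub, hdx, sub_zero, hyd]
    rw [smul_sub, h2, sub_self]
  rcases smul_eq_zero.1 hkey with h | h
  · exact absurd h hpZ
  · exact ⟨w, hwc, (sub_eq_zero.1 h).symm⟩

lemma torsion_from_primes {L : Finset (Finset (Fin m))}
    (h : ∀ z ∈ cyclesOn ℤ L, ∀ p : ℕ, p.Prime →
      (p : ℤ) • z ∈ boundariesOn ℤ L → z ∈ boundariesOn ℤ L) :
    ∀ z ∈ cyclesOn ℤ L, ∀ n : ℤ, n ≠ 0 →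
      n • z ∈ boundariesOn ℤ L → z ∈ boundariesOn ℤ L := by
  intro z hz
  suffices H : ∀ k : ℕ, ∀ n : ℤ, n.natAbs = k → n ≠ 0 →
      n • z ∈ boundariesOn ℤ L → z ∈ boundariesOn ℤ L by
    intro n hn0 hnz
    exact H n.natAbs n rfl hn0 hnz
  intro k
  induction k using Nat.strong_induction_on with
  | _ k ih =>
    intro n hk hn0 hnz
    by_cases hu : n.natAbs = 1
    · rcases Int.natAbs_eq_iff.1 hu with h1 | h1
      · rw [h1] at hnz
        simpa using hnz
      · rw [h1] at hnz
        have h2 := Submodule.neg_mem _ hnz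
        simpa using h2
    · obtain ⟨q, hq, c, rfl⟩ := Int.exists_prime_and_dvd hu
      rw [mul_smul] at hnz
      have hqp : q.natAbs.Prime := Int.prime_iff_natAbs_prime.1 hq
      have hc0 : c ≠ 0 := fun hc => hn0 (by rw [hc, mul_zero])
      have hq0 : q ≠ 0 := hq.ne_zero
      have hcz : c • z ∈ cyclesOn ℤ L := Submodule.smul_mem _ _ hz
      have hqcz : (q.natAbs : ℤ) • (c • z) ∈ boundariesOn ℤ L := by
        rcases Int.natAbs_eq q with hqe | hqe
        · rw [← hqe]
          exact hnz
        · have heq : (q.natAbs : ℤ) • (c • z) = -(q • (c • z)) := by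
            have hna : (q.natAbs : ℤ) = -q := by omega
            rw [hna, neg_smul]
          rw [heq]
          exact Submodule.neg_mem _ hnz
      have hczB : c • z ∈ boundariesOn ℤ L := h (c • z) hcz q.natAbs hqp hqcz
      have hlt : c.natAbs < k := by
        rw [← hk, Int.natAbs_mul]
        have h2 : 2 ≤ q.natAbs := hqp.two_le
        have hc1 : 1 ≤ c.natAbs := Int.natAbs_pos.2 hc0
        calc c.natAbs = 1 * c.natAbs := (one_mul _).symm
          _ < q.natAbs * c.natAbs :=
              (Nat.mul_lt_mul_right (Int.natAbs_pos.2 hc0)).2 (by omega)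
      exact ih c.natAbs hlt c rfl hc0 hczB

lemma core_fwd_span {L : Finset (Finset (Fin m))} (hdown : ∀ σ ∈ L, ∀ τ ⊆ σ, τ ∈ L)
    (hall : ∀ p : ℕ, p.Prime → cyclesOn (ZMod p) L ≤ bigM (ZMod p) L) :
    cyclesOn ℤ L ≤ bigM ℤ L := by
  have step : ∀ p : ℕ, p.Prime → ∀ x ∈ cyclesOn ℤ L,
      ∃ m' ∈ bigM ℤ L, ∃ w ∈ cyclesOn ℤ L, x = m' + (p : ℤ) • w := by
    intro p hp x hx
    haveI : NeZero p := ⟨hp.pos.ne'⟩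
    have hpZ : (p : ℤ) ≠ 0 := by exact_mod_cast hp.pos.ne'
    have h1 : redMap p x ∈ cyclesOn (ZMod p) L := by
      refine mem_cyclesOn.2 ⟨redMap_mem_chainsOn (mem_cyclesOn.1 hx).1, ?_⟩
      rw [← redMap_sb, (mem_cyclesOn.1 hx).2, map_zero]
    obtain ⟨m', hmM, hmred⟩ := redMap_bigM_surj (hall p hp h1)
    have hmcy := bigM_le_cyclesOn hdown hmM
    obtain ⟨w, hwc, hw⟩ := redMap_eq_zero_div (p := p)
      (sub_mem (mem_cyclesOn.1 hx).1 (mem_cyclesOn.1 hmcy).1)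
      (by rw [map_sub, hmred, sub_self])
    have hdw : simplicialBoundary ℤ m w = 0 := by
      have h2 : (p : ℤ) • simplicialBoundary ℤ m w = 0 := by
        rw [← map_smul, ← hw, map_sub, (mem_cyclesOn.1 hx).2, (mem_cyclesOn.1 hmcy).2,
          sub_zero]
      rcases smul_eq_zero.1 h2 with h | h
      · exact absurd h hpZ
      · exact h
    refine ⟨m', hmM, w, mem_cyclesOn.2 ⟨hwc, hdw⟩, ?_⟩
    rw [← hw]
    abel
  haveI : Module.Finite ℤ ↥(cyclesOn ℤ L) :=
    Module.Finite.iff_fg.2 (IsNoetherian.noetherian _)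
  set Mc := (bigM ℤ L).comap (cyclesOn ℤ L).subtype with hMc
  haveI : Module.Finite ℤ (↥(cyclesOn ℤ L) ⧸ Mc) :=
    Module.Finite.of_surjective Mc.mkQ (Submodule.mkQ_surjective Mc)
  have hdiv : ∀ p : ℕ, p.Prime → ∀ q : ↥(cyclesOn ℤ L) ⧸ Mc, ∃ r, q = (p : ℤ) • r := by
    intro p hp q
    obtain ⟨⟨v, hv⟩, rfl⟩ := Submodule.mkQ_surjective Mc q
    obtain ⟨m', hmM, w, hwCy, hvdecomp⟩ := step p hp v hv
    refine ⟨Mc.mkQ ⟨w, hwCy⟩, ?_⟩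
    have hsmul : (p : ℤ) • Mc.mkQ ⟨w, hwCy⟩ = Mc.mkQ ((p : ℤ) • ⟨w, hwCy⟩) := by
      rw [map_smul]
    rw [hsmul, Submodule.mkQ_apply, Submodule.mkQ_apply, Submodule.Quotient.eq]
    have hval : v - (p : ℤ) • w = m' := by
      rw [hvdecomp]
      abel
    show (⟨v, hv⟩ : ↥(cyclesOn ℤ L)) - (p : ℤ) • ⟨w, hwCy⟩ ∈ Mc
    have : ((⟨v, hv⟩ : ↥(cyclesOn ℤ L)) - (p : ℤ) • ⟨w, hwCy⟩ : ↥(cyclesOn ℤ L)) =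
        ⟨v - (p : ℤ) • w, sub_mem hv (Submodule.smul_mem _ _ hwCy)⟩ := rfl
    rw [this, hMc]
    simpa [Submodule.mem_comap] using hval ▸ hmM
  intro x hx
  have hq0 := lemA hdiv (Mc.mkQ ⟨x, hx⟩)
  rw [Submodule.mkQ_apply, Submodule.Quotient.mk_eq_zero] at hq0
  exact hq0

theorem main {L : Finset (Finset (Fin m))} (hdown : ∀ σ ∈ L, ∀ τ ⊆ σ, τ ∈ L) :
    (∀ p : ℕ, p.Prime →
        Submodule.span (ZMod p)
          ((fun I => mfClass (ZMod p) L I) '' {I | IsMissingFace L I}) = ⊤)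
      ↔ (Submodule.span ℤ ((fun I => mfClass ℤ L I) '' {I | IsMissingFace L I}) = ⊤ ∧
          ∀ (x : redHomology ℤ L) (n : ℤ), n ≠ 0 → n • x = 0 → x = 0) := by
  constructor
  · intro h
    have hall : ∀ p : ℕ, p.Prime → cyclesOn (ZMod p) L ≤ bigM (ZMod p) L :=
      fun p hp => (spanTop_iff hdown).1 (h p hp)
    exact ⟨(spanTop_iff hdown).2 (core_fwd_span hdown hall),
      (torsion_iff L).2 (torsion_from_primes (core_fwd_tfp hdown hall))⟩
  · rintro ⟨hM, htf⟩ p hp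
    exact (spanTop_iff hdown).2
      (core_back hdown ((spanTop_iff hdown).1 hM) ((torsion_iff L).1 htf) p hp)

end Stmt8Aux

theorem stmt8 {m : ℕ} (K : Finset (Finset (Fin m)))
    (hdown : ∀ σ ∈ K, ∀ τ ⊆ σ, τ ∈ K) (hempty : (∅ : Finset (Fin m)) ∈ K) :
    (∀ p : ℕ, p.Prime → IsHMF (ZMod p) K) ↔
      (IsHMF ℤ K ∧
        ∀ J : Finset (Fin m), J.Nonempty →
          ∀ (x : redHomology ℤ (K.filter (· ⊆ J))) (n : ℤ), n ≠ 0 → n • x = 0 → x = 0) := by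
  have hdownL : ∀ J : Finset (Fin m), ∀ σ ∈ K.filter (· ⊆ J), ∀ τ ⊆ σ,
      τ ∈ K.filter (· ⊆ J) := by
    intro J σ hσ τ hτ
    rw [Finset.mem_filter] at hσ ⊢
    exact ⟨hdown σ hσ.1 τ hτ, hτ.trans hσ.2⟩
  constructor
  · intro h
    constructor
    · intro J hJ
      exact ((Stmt8Aux.main (hdownL J)).1 (fun p hp => h p hp J hJ)).1
    · intro J hJ
      exact ((Stmt8Aux.main (hdownL J)).1 (fun p hp => h p hp J hJ)).2
  · rintro ⟨h1, h2⟩ p hp J hJ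
    exact ((Stmt8Aux.main (hdownL J)).2 ⟨h1 J hJ, h2 J hJ⟩) p hp
end

section
/- If a simplicial complex K has reduced homology generated by classes of missing faces (over some ring k with H̃_*(K;k) ≠ 0 only via missing faces), then the 1-skeleton of K is a chordal graph; that is, every cycle of length ≥ 4 in K^1 has a chord. -/
lemma sb_single (R : Type*) [CommRing R] {m : ℕ} (J : Finset (Fin m)) :
    simplicialBoundary R m (Pi.single J (1:R)) = missingFaceChain R J := by
  unfold simplicialBoundary missingFaceChain
  rw [Matrix.mulVecLin_apply, Matrix.mulVec_single]
  funext τ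
  simp

lemma edge_mfChain (R : Type*) [CommRing R] {m : ℕ} (a b : Fin m) (hab : a ≠ b) :
    (if a < b then (1:R) else -1) • missingFaceChain R {a, b} =
      Pi.single ({b} : Finset (Fin m)) (1:R) - Pi.single ({a} : Finset (Fin m)) (1:R) := by
  have hea : ({a, b} : Finset (Fin m)).erase a = {b} := by
    rw [Finset.erase_insert (by simp [hab])]
  have heb : ({a, b} : Finset (Fin m)).erase b = {a} := by
    rw [Finset.pair_comm, Finset.erase_insert (by simp [Ne.symm hab])]
  have hfa : (({a, b} : Finset (Fin m)).filter (· < a)) = if b < a then {b} else ∅ := by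
    rw [show ({a,b} : Finset (Fin m)) = insert a {b} from rfl,
      Finset.filter_insert, Finset.filter_singleton, if_neg (lt_irrefl a)]
  have hfb : (({a, b} : Finset (Fin m)).filter (· < b)) = if a < b then {a} else ∅ := by
    rw [show ({a,b} : Finset (Fin m)) = insert a {b} from rfl,
      Finset.filter_insert, Finset.filter_singleton, if_neg (lt_irrefl b)]
    split_ifs <;> rfl
  funext τ
  simp only [Pi.smul_apply, Pi.sub_apply, smul_eq_mul, missingFaceChain]
  rw [Finset.sum_pair hab, hea, heb, hfa, hfb]
  rcases hab.lt_or_gt with h | h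
  · rw [if_pos h, if_neg (asymm h), if_pos h]
    simp only [Finset.card_singleton, Finset.card_empty, pow_zero, pow_one, one_mul,
      Pi.single_apply, eq_comm]
    split_ifs <;> ring
  · rw [if_neg (asymm h), if_pos h, if_neg (asymm h)]
    simp only [Finset.card_singleton, Finset.card_empty, pow_zero, pow_one,
      Pi.single_apply, eq_comm]
    split_ifs <;> ring

lemma mem_chainsOn_iff (R : Type*) [CommRing R] {m : ℕ} (K : Finset (Finset (Fin m)))
    (c : Finset (Fin m) → R) : c ∈ chainsOn R K ↔ ∀ σ, σ ∉ K → c σ = 0 := by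
  unfold chainsOn
  rw [Submodule.mem_pi]
  constructor
  · intro h σ hσ
    have := h σ (Set.mem_univ σ)
    rwa [if_neg hσ, Submodule.mem_bot] at this
  · intro h σ _
    split_ifs with h'
    · exact Submodule.mem_top
    · exact (Submodule.mem_bot R).mpr (h σ h')

theorem stmt10 (k : Type*) [CommRing k] [Nontrivial k]
    {m : ℕ} (K : Finset (Finset (Fin m)))
    (hdown : ∀ σ ∈ K, ∀ τ ⊆ σ, τ ∈ K) (hempty : (∅ : Finset (Fin m)) ∈ K)
    -- `K` is HMF over `k`: the homology of every full subcomplex is generated by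
    -- missing-face classes
    (hHMF : ∀ J : Finset (Fin m), J.Nonempty →
      Submodule.span k
        ((fun I => mfClass k (K.filter (· ⊆ J)) I) ''
          {I | IsMissingFace (K.filter (· ⊆ J)) I}) = ⊤) :
    -- the 1-skeleton of `K` is chordal
    ∀ n : ℕ, 4 ≤ n → ∀ f : ZMod n → Fin m, Function.Injective f →
      (∀ i : ZMod n, ({f i, f (i + 1)} : Finset (Fin m)) ∈ K) →
      ∃ i j : ZMod n, j ≠ i ∧ j ≠ i + 1 ∧ i ≠ j + 1 ∧
        ({f i, f j} : Finset (Fin m)) ∈ K := by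
  intro n hn f hf hedges
  by_contra hchord
  push_neg at hchord
  haveI : NeZero n := ⟨by omega⟩
  -- small nonzero casts
  have hkey : ∀ a : ℕ, 0 < a → a < n → (a : ZMod n) ≠ 0 := by
    intro a ha han h
    have := (ZMod.natCast_eq_zero_iff a n).mp h
    have := Nat.le_of_dvd ha this
    omega
  have h1ne : (1 : ZMod n) ≠ 0 := by
    have := hkey 1 (by omega) (by omega); simpa using this
  have h2ne : (2 : ZMod n) ≠ 0 := by
    have := hkey 2 (by omega) (by omega); simpa using this
  have h3ne : (3 : ZMod n) ≠ 0 := by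
    have := hkey 3 (by omega) (by omega); simpa using this
  -- adjacency
  have hadj : ∀ a b : ZMod n, a ≠ b → ({f a, f b} : Finset (Fin m)) ∈ K →
      b = a + 1 ∨ a = b + 1 := by
    intro a b hab hK
    by_contra h
    push_neg at h
    exact hchord a b (Ne.symm hab) h.1 h.2 hK
  -- no triangles
  have htri : ∀ a b c : ZMod n, a ≠ b → a ≠ c → b ≠ c →
      ({f a, f b} : Finset (Fin m)) ∈ K → ({f a, f c} : Finset (Fin m)) ∈ K →
      ({f b, f c} : Finset (Fin m)) ∈ K → False := by
    intro a b c hab hac hbc h1 h2 h3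
    rcases hadj a b hab h1 with h | h <;> rcases hadj a c hac h2 with h' | h' <;>
      rcases hadj b c hbc h3 with h'' | h''
    · exact hbc (h.trans h'.symm)
    · exact hbc (h.trans h'.symm)
    · exact h3ne (by linear_combination -h - h' - h'')
    · exact hab (h''.trans h'.symm).symm
    · exact h1ne (by linear_combination h'' - h' - h)
    · exact h3ne (by linear_combination -h - h' - h'')
    · exact hbc (add_right_cancel (h.symm.trans h'))
    · exact hbc (add_right_cancel (h.symm.trans h'))
  -- the vertex set of the cycle
  set J0 : Finset (Fin m) := Finset.image f Finset.univ with hJ0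
  have hmemJ0 : ∀ i : ZMod n, f i ∈ J0 := fun i => Finset.mem_image_of_mem f (Finset.mem_univ i)
  -- no 3-element subsets of J0 with all pairs in K
  have hbig : ∀ τ : Finset (Fin m), τ.card = 3 → τ ⊆ J0 →
      (∀ x ∈ τ, ∀ y ∈ τ, x ≠ y → ({x, y} : Finset (Fin m)) ∈ K) → False := by
    intro τ hcard hsub hpairs
    obtain ⟨x, hx⟩ := Finset.card_pos.mp (show 0 < τ.card by omega)
    have hc1 : 0 < (τ.erase x).card := by rw [Finset.card_erase_of_mem hx]; omega
    obtain ⟨y, hy⟩ := Finset.card_pos.mp hc1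
    have hc2 : 0 < ((τ.erase x).erase y).card := by
      rw [Finset.card_erase_of_mem hy, Finset.card_erase_of_mem hx]; omega
    obtain ⟨w, hw⟩ := Finset.card_pos.mp hc2
    have hyt : y ∈ τ := Finset.mem_of_mem_erase hy
    have hwt : w ∈ τ := Finset.mem_of_mem_erase (Finset.mem_of_mem_erase hw)
    have hxy : x ≠ y := (Finset.ne_of_mem_erase hy).symm
    have hyw : y ≠ w := (Finset.ne_of_mem_erase hw).symm
    have hxw : x ≠ w := (Finset.ne_of_mem_erase (Finset.mem_of_mem_erase hw)).symm
    obtain ⟨a, -, ha⟩ := Finset.mem_image.mp (hsub hx)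
    obtain ⟨b, -, hb⟩ := Finset.mem_image.mp (hsub hyt)
    obtain ⟨c, -, hc⟩ := Finset.mem_image.mp (hsub hwt)
    subst ha hb hc
    exact htri a b c (fun e => hxy (congrArg f e)) (fun e => hxw (congrArg f e))
      (fun e => hyw (congrArg f e)) (hpairs _ hx _ hyt hxy) (hpairs _ hx _ hwt hxw)
      (hpairs _ hyt _ hwt hyw)
  set KJ : Finset (Finset (Fin m)) := K.filter (· ⊆ J0) with hKJ
  have hKJmem : ∀ σ : Finset (Fin m), σ ∈ KJ ↔ σ ∈ K ∧ σ ⊆ J0 := fun σ => Finset.mem_filter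
  have hτ01 : f 0 ≠ f 1 := fun e => h1ne (hf e).symm
  set τ0 : Finset (Fin m) := {f 0, f 1} with hτ0
  have hτ0card : τ0.card = 2 := Finset.card_pair hτ01
  have hno3 : ∀ J' ∈ KJ, J'.card ≠ 3 := by
    intro J' hJ' h3
    obtain ⟨hJK, hJsub⟩ := (hKJmem J').mp hJ'
    exact hbig J' h3 hJsub (fun x hx y hy hxy =>
      hdown J' hJK {x, y} (Finset.insert_subset hx (Finset.singleton_subset_iff.mpr hy)))
  -- missing-face chains vanish at τ0
  have hmf0 : ∀ I : Finset (Fin m), IsMissingFace KJ I → missingFaceChain k I τ0 = 0 := by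
    intro I hI
    unfold missingFaceChain
    apply Finset.sum_eq_zero
    intro i hi
    rw [if_neg]
    intro heq
    have hIeq : I = insert i τ0 := by rw [← heq, Finset.insert_erase hi]
    have hiτ : i ∉ τ0 := heq ▸ Finset.notMem_erase i I
    have hIcard : I.card = 3 := by rw [hIeq, Finset.card_insert_of_notMem hiτ, hτ0card]
    have hss : ∀ s : Finset (Fin m), s ⊆ I → s.card < 3 → s ⊂ I := fun s hs hc =>
      ⟨hs, fun h' => by have := Finset.card_le_card h'; omega⟩
    have hsub : I ⊆ J0 := by
      intro x hx
      have hmem : ({x} : Finset (Fin m)) ∈ KJ :=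
        hI.2 {x} (hss {x} (Finset.singleton_subset_iff.mpr hx) (by simp))
      exact ((hKJmem _).mp hmem).2 (Finset.mem_singleton_self x)
    refine hbig I hIcard hsub (fun x hx y hy hxy => ?_)
    have hmem : ({x, y} : Finset (Fin m)) ∈ KJ :=
      hI.2 {x, y} (hss {x, y}
        (Finset.insert_subset hx (Finset.singleton_subset_iff.mpr hy))
        (by rw [Finset.card_pair hxy]; omega))
    exact ((hKJmem _).mp hmem).1
  -- boundaries vanish at τ0
  have hbd0 : ∀ x ∈ boundariesOn k KJ, x τ0 = 0 := by
    rintro x ⟨c, hc, rfl⟩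
    unfold simplicialBoundary
    rw [Matrix.mulVecLin_apply]
    show ∑ J : Finset (Fin m),
      (∑ j ∈ J, if J.erase j = τ0 then (-1 : k) ^ ((J.filter (· < j)).card) else 0) * c J = 0
    apply Finset.sum_eq_zero
    intro J _
    rcases eq_or_ne (c J) 0 with h | h
    · rw [h, mul_zero]
    · have hJKJ : J ∈ KJ := by
        by_contra hN
        exact h ((mem_chainsOn_iff k KJ c).mp hc J hN)
      have hz : (∑ j ∈ J, if J.erase j = τ0 then (-1 : k) ^ ((J.filter (· < j)).card) else 0)
          = 0 := by
        apply Finset.sum_eq_zero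
        intro j hj
        rw [if_neg]
        intro heq
        have hJeq : J = insert j τ0 := by rw [← heq, Finset.insert_erase hj]
        have hjτ : j ∉ τ0 := heq ▸ Finset.notMem_erase j J
        exact hno3 J hJKJ (by rw [hJeq, Finset.card_insert_of_notMem hjτ, hτ0card])
      rw [hz, zero_mul]
  -- the cycle chain
  have hne1 : ∀ i : ZMod n, f i ≠ f (i + 1) := fun i e => h1ne (left_eq_add.mp (hf e))
  have hedgeKJ : ∀ i : ZMod n, ({f i, f (i + 1)} : Finset (Fin m)) ∈ KJ := fun i =>
    (hKJmem _).mpr ⟨hedges i,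
      Finset.insert_subset (hmemJ0 i) (Finset.singleton_subset_iff.mpr (hmemJ0 (i + 1)))⟩
  set z : Finset (Fin m) → k :=
    ∑ i : ZMod n, (if f i < f (i + 1) then (1 : k) else -1) •
      (Pi.single ({f i, f (i + 1)} : Finset (Fin m)) (1 : k) : Finset (Fin m) → k) with hzdef
  have hzchain : z ∈ chainsOn k KJ := by
    rw [hzdef]
    apply Submodule.sum_mem
    intro i _
    apply Submodule.smul_mem
    rw [mem_chainsOn_iff]
    intro σ hσ
    exact Pi.single_eq_of_ne (fun e => hσ (by rw [e]; exact hedgeKJ i)) 1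
  have hdz : simplicialBoundary k m z = 0 := by
    rw [hzdef, map_sum]
    have step : ∀ i : ZMod n, simplicialBoundary k m
        ((if f i < f (i + 1) then (1 : k) else -1) •
          (Pi.single ({f i, f (i + 1)} : Finset (Fin m)) (1 : k) : Finset (Fin m) → k)) =
        Pi.single ({f (i + 1)} : Finset (Fin m)) (1 : k) -
          Pi.single ({f i} : Finset (Fin m)) (1 : k) := by
      intro i
      rw [map_smul, sb_single, edge_mfChain k (f i) (f (i + 1)) (hne1 i)]
    simp only [step]
    rw [Finset.sum_sub_distrib, sub_eq_zero]
    exact Fintype.sum_equiv (Equiv.addRight 1) _ _ (fun x => rfl)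
  have hzcyc : z ∈ cyclesOn k KJ := ⟨hzchain, LinearMap.mem_ker.mpr hdz⟩
  have hzval : z τ0 = (if f 0 < f 1 then (1 : k) else -1) := by
    rw [hzdef, Finset.sum_apply]
    rw [Finset.sum_eq_single_of_mem (0 : ZMod n) (Finset.mem_univ 0)]
    · rw [hτ0]; simp
    · intro i _ hi0
      have hneq : τ0 ≠ ({f i, f (i + 1)} : Finset (Fin m)) := by
        intro e
        have hfi : f i ∈ τ0 := e ▸ Finset.mem_insert_self _ _
        have hfi1 : f (i + 1) ∈ τ0 := e ▸ Finset.mem_insert_of_mem (Finset.mem_singleton_self _)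
        rw [hτ0] at hfi hfi1
        rcases Finset.mem_insert.mp hfi with h | h
        · exact hi0 (hf h)
        · have hi1 : i = 1 := hf (Finset.mem_singleton.mp h)
          rcases Finset.mem_insert.mp hfi1 with h' | h'
          · have e2 := hf h'
            rw [hi1] at e2
            exact h2ne (by linear_combination e2)
          · have e2 := hf (Finset.mem_singleton.mp h')
            exact hi0 (by linear_combination e2)
      simp [Pi.single_eq_of_ne hneq]
  -- linear functional: evaluation at τ0, descended to homology
  have hspan := hHMF J0 ⟨f 0, hmemJ0 0⟩
  rw [← hKJ] at hspan
  set ψ : ↥(cyclesOn k KJ) →ₗ[k] k := (LinearMap.proj τ0).comp (cyclesOn k KJ).subtype with hψ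
  have hker : (boundariesOn k KJ).comap (cyclesOn k KJ).subtype ≤ LinearMap.ker ψ := by
    rintro ⟨x, hx⟩ hmem
    exact hbd0 x hmem
  set φ : redHomology k KJ →ₗ[k] k :=
    Submodule.liftQ ((boundariesOn k KJ).comap (cyclesOn k KJ).subtype) ψ hker with hφ
  have hker2 : ((fun I => mfClass k KJ I) '' {I | IsMissingFace KJ I}) ⊆
      ↑(LinearMap.ker φ) := by
    rintro _ ⟨I, hI, rfl⟩
    simp only [SetLike.mem_coe, LinearMap.mem_ker]
    by_cases h : missingFaceChain k I ∈ cyclesOn k KJ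
    · rw [show mfClass k KJ I = (Submodule.Quotient.mk (⟨missingFaceChain k I, h⟩ : ↥(cyclesOn k KJ)) :
        redHomology k KJ) from dif_pos h]; exact hmf0 I hI
    · rw [show mfClass k KJ I = (0 : redHomology k KJ) from dif_neg h]; exact map_zero φ
  have hall : ∀ x : redHomology k KJ, φ x = 0 := by
    have hle := Submodule.span_le.mpr hker2
    rw [hspan] at hle
    exact fun x => LinearMap.mem_ker.mp (hle Submodule.mem_top)
  have hfinal := hall (Submodule.Quotient.mk (⟨z, hzcyc⟩ : ↥(cyclesOn k KJ)))
  have : z τ0 = 0 := hfinal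
  rw [hzval] at this
  split_ifs at this
  · exact one_ne_zero this
  · exact one_ne_zero (neg_eq_zero.mp this)
end
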